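/- For n ≥ 2, there exists an n×n complex matrix A that cannot be expressed as a finite product of symmetric Toeplitz matrices. -/

import Mathlib

private def Cent {n : ℕ} (M : Matrix (Fin n) (Fin n) ℂ) : Prop :=
  ∀ i k : Fin n, M i.rev k.rev = M i k

private lemma cent_one {n : ℕ} : Cent (1 : Matrix (Fin n) (Fin n) ℂ) := by
  intro i k
  simp [Matrix.one_apply, Fin.rev_inj]

private lemma cent_mul {n : ℕ} {M N : Matrix (Fin n) (Fin n) ℂ}
    (hM : Cent M) (hN : Cent N) : Cent (M * N) := by
  intro i k
  simp only [Matrix.mul_apply]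
  exact (Fintype.sum_bijective Fin.rev Fin.rev_bijective
    (fun j => M i j * N j k) (fun j => M i.rev j * N j k.rev)
    (fun j => by show M i j * N j k = M i.rev j.rev * N j.rev k.rev; rw [hM, hN])).symm

private lemma cent_prod {n : ℕ} (L : List (Matrix (Fin n) (Fin n) ℂ))
    (h : ∀ M ∈ L, Cent M) : Cent L.prod := by
  induction L with
  | nil => simpa using cent_one
  | cons a l ih =>
    simp only [List.prod_cons]
    exact cent_mul (h a (by simp)) (ih fun M hM => h M (by simp [hM]))

/-- For `n ≥ 2`, some `n × n` matrix is not a finite product of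
symmetric Toeplitz matrices. -/
theorem exists_not_product_symm_toeplitz (n : ℕ) (hn : 2 ≤ n) :
    ∃ A : Matrix (Fin n) (Fin n) ℂ,
      ∀ (r : ℕ) (T : Fin r → Matrix (Fin n) (Fin n) ℂ),
        (∀ m : Fin r,
          (∀ i k i' k' : Fin n,
            (k : ℤ) - (i : ℤ) = (k' : ℤ) - (i' : ℤ) → T m i k = T m i' k') ∧
          (T m).transpose = T m) →
        A ≠ (List.ofFn T).prod := by
  haveI : NeZero n := ⟨by omega⟩
  refine ⟨fun i k => if i = 0 ∧ k = 0 then 1 else 0, ?_⟩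
  intro r T hT hA
  have hcent : Cent ((List.ofFn T).prod) := by
    apply cent_prod
    intro M hM
    obtain ⟨m, rfl⟩ := List.mem_ofFn.1 hM
    obtain ⟨htoe, hsym⟩ := hT m
    intro i k
    have hdiff : (k.rev : ℤ) - (i.rev : ℤ) = (i : ℤ) - (k : ℤ) := by
      have hi := i.isLt
      have hk := k.isLt
      simp only [Fin.val_rev]
      omega
    have h1 : T m i.rev k.rev = T m k i := htoe i.rev k.rev k i hdiff
    have h2 : T m k i = T m i k := by
      have := congrFun (congrFun hsym i) k
      simpa [Matrix.transpose_apply] using this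
    rw [h1, h2]
  have h0 : (0 : Fin n) ≠ Fin.rev 0 := by
    intro h
    have := congrArg Fin.val h
    simp [Fin.val_rev] at this
    omega
  have := hcent 0 0
  rw [← hA] at this
  simp [h0.symm] at this
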